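/- arXiv:math/0307185 — 3 statements merged into one kernel-verified Lean document; each statement's English description precedes it below -/
import Mathlib

section
/- Let T be a linear track extension of a category A by a natural system D (so T is a groupoid-enriched category with T_ho = A and Aut_T(f) ≅ D_{[f]} naturally). Then T has finite lax products (the functors Hom(Y,X) → Hom(Y,X₁) × ⋯ × Hom(Y,X_n) induced by p_i : X → X_i are equivalences of groupoids for all Y) if and only if A has finite products and D is cartesian. -/
open CategoryTheory CategoryTheory.Limits Bicategory

universe w v u

/-- An object of the Baues–Wirsching category of factorizations of a category `C`. -/
structure FactObj (C : Type u) [Category.{v} C] : Type (max u v) where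
  {src : C}
  {tgt : C}
  hom : src ⟶ tgt

instance FactObj.category (C : Type u) [Category.{v} C] : Category (FactObj C) where
  Hom f g := { p : (g.src ⟶ f.src) × (f.tgt ⟶ g.tgt) // g.hom = p.1 ≫ f.hom ≫ p.2 }
  id f := ⟨(𝟙 _, 𝟙 _), by simp⟩
  comp {f g h} p q := ⟨(q.1.1 ≫ p.1.1, p.1.2 ≫ q.1.2), by simp [q.2, p.2]⟩
  id_comp p := by apply Subtype.ext; simp
  comp_id p := by apply Subtype.ext; simp
  assoc p q r := by apply Subtype.ext; simp

/-- A natural system of abelian groups on `C`. -/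
abbrev NaturalSystem (C : Type u) [Category.{v} C] : Type _ :=
  FactObj C ⥤ AddCommGrpCat.{v}

/-- `f ⟶ f ≫ b` in the factorization category. -/
def natPost {C : Type u} [Category.{v} C] {X Y Z : C} (f : X ⟶ Y) (b : Y ⟶ Z) :
    (FactObj.mk f) ⟶ (FactObj.mk (f ≫ b)) :=
  ⟨(𝟙 X, b), by simp⟩

/-- `f ⟶ a ≫ f` in the factorization category. -/
def natPre {C : Type u} [Category.{v} C] {X Y Z : C} (a : X ⟶ Y) (f : Y ⟶ Z) :
    (FactObj.mk f) ⟶ (FactObj.mk (a ≫ f)) :=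
  ⟨(a, 𝟙 Z), by simp⟩

/-- Cartesianness of a natural system. -/
def IsCartesianNS {C : Type u} [Category.{v} C] (D : NaturalSystem C) : Prop :=
  (∀ {X T : C} (_ : IsTerminal T) (f : X ⟶ T), Subsingleton (D.obj (FactObj.mk f))) ∧
  (∀ {X P X₁ X₂ : C} (p₁ : P ⟶ X₁) (p₂ : P ⟶ X₂)
      (_ : IsLimit (BinaryFan.mk p₁ p₂)) (f : X ⟶ P),
    Function.Bijective (fun a : D.obj (FactObj.mk f) =>
      ((D.map (natPost f p₁) a, D.map (natPost f p₂) a) :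
        D.obj (FactObj.mk (f ≫ p₁)) × D.obj (FactObj.mk (f ≫ p₂)))))

/-- A wrapper for a category structure on a given type of objects. -/
structure CatOn (C : Type u) : Type (max u (v + 1)) where
  cat : Category.{v} C

variable {C : Type u}

/-- Morphisms of the wrapped category structure. -/
abbrev AHom (catA : CatOn.{v} C) (X Y : C) : Type v :=
  @Quiver.Hom C (@CategoryStruct.toQuiver C (@Category.toCategoryStruct C catA.cat)) X Y

/-- Composition in the wrapped category structure. -/
abbrev aComp (catA : CatOn.{v} C) {X Y Z : C}
    (f : AHom catA X Y) (g : AHom catA Y Z) : AHom catA X Z :=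
  @CategoryStruct.comp C (@Category.toCategoryStruct C catA.cat) X Y Z f g

/-- The factorization category object determined by a morphism of the wrapped
category. -/
abbrev mkA (catA : CatOn.{v} C) {X Y : C} (φ : AHom catA X Y) :
    @FactObj C catA.cat :=
  @FactObj.mk C catA.cat X Y φ

/-- A track category: a strict 2-category in which all 2-cells are invertible. -/
class TrackGroupoid (B : Type u) [Bicategory.{w, v} B] : Prop where
  isIso : ∀ {X Y : B} {f g : X ⟶ Y} (η : f ⟶ g), IsIso η

attribute [instance] TrackGroupoid.isIso

/-- A linear track extension `0 → D → T₁ ⇉ T₀ → A → 0` of a category `A` (given by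
`catA`, on the same objects as the track category `T`, identified via `ι`) by a
natural system `D`:  a full quotient functor `q : T₀ → A` which is the identity on
objects, such that `q f = q g` iff `f ≃ g`, together with a compatible isomorphism
`τ : D_{q f} ≅ Aut(f)` of natural systems (compatible with whiskering, and carrying
the transport of `D` along tracks to conjugation). -/
structure TrackExtData (catA : CatOn.{v} C) (D : @NaturalSystem C catA.cat)
    (T : Type u) [Bicategory.{w, v} T] [Bicategory.Strict T] [TrackGroupoid T]
    (ι : T → C) where
  qmap : ∀ {X Y : T}, (X ⟶ Y) → AHom catA (ι X) (ι Y)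
  q_id : ∀ X : T, qmap (𝟙 X) =
    @CategoryStruct.id C (@Category.toCategoryStruct C catA.cat) (ι X)
  q_comp : ∀ {X Y Z : T} (f : X ⟶ Y) (g : Y ⟶ Z),
    qmap (f ≫ g) = aComp catA (qmap f) (qmap g)
  q_full : ∀ {X Y : T} (φ : AHom catA (ι X) (ι Y)), ∃ f : X ⟶ Y, qmap f = φ
  q_iff : ∀ {X Y : T} (f g : X ⟶ Y), qmap f = qmap g ↔ Nonempty (f ⟶ g)
  τ : ∀ {X Y : T} (f : X ⟶ Y), D.obj (mkA catA (qmap f)) ≃ (f ⟶ f)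
  τ_add : ∀ {X Y : T} (f : X ⟶ Y) (a b : D.obj (mkA catA (qmap f))),
    τ f (a + b) = τ f a ≫ τ f b
  τ_whiskL : ∀ {W X Y : T} (e : W ⟶ X) (f : X ⟶ Y) (a : D.obj (mkA catA (qmap f))),
    τ (e ≫ f) (D.map (eqToHom (by rw [q_comp]))
        (D.map (@natPre C catA.cat _ _ _ (qmap e) (qmap f)) a)) = e ◁ τ f a
  τ_whiskR : ∀ {X Y Z : T} (f : X ⟶ Y) (h : Y ⟶ Z) (a : D.obj (mkA catA (qmap f))),
    τ (f ≫ h) (D.map (eqToHom (by rw [q_comp]))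
        (D.map (@natPost C catA.cat _ _ _ (qmap f) (qmap h)) a)) = τ f a ▷ h
  τ_conj : ∀ {X Y : T} {f g : X ⟶ Y} (ξ : f ⟶ g) (a : D.obj (mkA catA (qmap f))),
    τ g (D.map (eqToHom (by rw [(q_iff f g).2 ⟨ξ⟩])) a) = inv ξ ≫ τ f a ≫ ξ


section AuxLemmas


theorem bij_pi_post {ι : Type*} {γ δ : ι → Type*} {α : Type*}
    (e : ∀ i, γ i → δ i) (he : ∀ i, Function.Bijective (e i))
    (u : α → ∀ i, γ i) :
    Function.Bijective (fun a i => e i (u a i)) ↔ Function.Bijective u := by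
  have hE : Function.Bijective (fun x : ∀ i, γ i => fun i => e i (x i)) :=
    (Equiv.piCongrRight fun i => Equiv.ofBijective _ (he i)).bijective
  have h : (fun a i => e i (u a i)) = (fun x : ∀ i, γ i => fun i => e i (x i)) ∘ u := rfl
  rw [h, Function.Bijective.of_comp_iff' hE]

theorem bij_transfer {α β : Type*} {ι : Type*} {γ δ : ι → Type*}
    (e : α → β) (he : Function.Bijective e)
    (ek : ∀ i, γ i → δ i) (hek : ∀ i, Function.Bijective (ek i))
    (u : α → ∀ i, γ i) (v : β → ∀ i, δ i)
    (hcomm : ∀ a i, ek i (u a i) = v (e a) i) :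
    Function.Bijective u ↔ Function.Bijective v := by
  have h1 : (fun a i => ek i (u a i)) = v ∘ e := funext fun a => funext fun i => hcomm a i
  rw [← bij_pi_post ek hek u, h1, Function.Bijective.of_comp_iff v he]

/- ---------- FactObj lemmas ---------- -/

section FactLemmas

variable {A : Type u} [Category.{v} A]

theorem FactObj.comp_val {x y z : FactObj A} (p : x ⟶ y) (q : y ⟶ z) :
    (p ≫ q).1 = (q.1.1 ≫ p.1.1, p.1.2 ≫ q.1.2) := rfl

theorem FactObj.id_val (x : FactObj A) : (𝟙 x : x ⟶ x).1 = (𝟙 x.src, 𝟙 x.tgt) := rfl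

theorem FactObj.eqToHom_mk {X Y : A} {φ ψ : X ⟶ Y} (h : φ = ψ)
    (h2 : FactObj.mk φ = FactObj.mk ψ) :
    eqToHom h2 = ⟨(𝟙 X, 𝟙 Y), by simp [h]⟩ := by
  subst h; rfl

theorem natPost_natPost {X Y Z W : A} (f : X ⟶ Y) (b : Y ⟶ Z) (c : Z ⟶ W) :
    natPost f b ≫ natPost (f ≫ b) c =
      natPost f (b ≫ c) ≫ eqToHom
        (show FactObj.mk (f ≫ (b ≫ c)) = FactObj.mk ((f ≫ b) ≫ c) by
          rw [Category.assoc]) := by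
  rw [FactObj.eqToHom_mk (Category.assoc f b c).symm]
  apply Subtype.ext
  simp [FactObj.comp_val, natPost]

theorem D_natPost_comp (D : NaturalSystem A) {X Y Z W : A} (f : X ⟶ Y) (b : Y ⟶ Z) (c : Z ⟶ W)
    (a : D.obj (FactObj.mk f)) :
    D.map (natPost (f ≫ b) c) (D.map (natPost f b) a) =
      D.map (eqToHom
        (show FactObj.mk (f ≫ (b ≫ c)) = FactObj.mk ((f ≫ b) ≫ c) by rw [Category.assoc]))
        (D.map (natPost f (b ≫ c)) a) := by
  rw [← CategoryTheory.comp_apply, ← CategoryTheory.comp_apply, ← D.map_comp, ← D.map_comp,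
    natPost_natPost]

theorem D_eqToHom_bij (D : NaturalSystem A) {x y : FactObj A} (h : x = y) :
    Function.Bijective (D.map (eqToHom h)) := by
  subst h
  rw [eqToHom_refl, D.map_id]
  exact ⟨fun a b hab => by simpa using hab, fun b => ⟨b, by simp⟩⟩

theorem natPost_isIso {X Y Z : A} (f : X ⟶ Y) (b : Y ⟶ Z) [IsIso b] : IsIso (natPost f b) := by
  refine ⟨⟨(𝟙 X, inv b), by simp⟩, ?_, ?_⟩
  · apply Subtype.ext; simp [FactObj.comp_val, natPost, FactObj.id_val]
  · apply Subtype.ext; simp [FactObj.comp_val, natPost, FactObj.id_val]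

theorem D_map_bij (D : NaturalSystem A) {x y : FactObj A} (i : x ⟶ y) [IsIso i] :
    Function.Bijective (D.map i) :=
  ConcreteCategory.bijective_of_isIso (D.map i)

end FactLemmas

end AuxLemmas

section ASide


variable {A : Type u} [Category.{v} A]

theorem D_eqToHom_inv (D : NaturalSystem A) {x y : FactObj A} (h : x = y)
    (a : D.obj x) : D.map (eqToHom h.symm) (D.map (eqToHom h) a) = a := by
  subst h; simp

theorem exu_isLimit {X₁ X₂ P : A} (p₁ : P ⟶ X₁) (p₂ : P ⟶ X₂)
    (h : ∀ (Y : A) (f₁ : Y ⟶ X₁) (f₂ : Y ⟶ X₂), ∃! f : Y ⟶ P, f ≫ p₁ = f₁ ∧ f ≫ p₂ = f₂) :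
    Nonempty (IsLimit (BinaryFan.mk p₁ p₂)) :=
  ⟨BinaryFan.isLimitMk (fun s => (h _ s.fst s.snd).choose)
    (fun s => (h _ s.fst s.snd).choose_spec.1.1)
    (fun s => (h _ s.fst s.snd).choose_spec.1.2)
    (fun s m hm1 hm2 => (h _ s.fst s.snd).choose_spec.2 m ⟨hm1, hm2⟩)⟩

theorem isLimit_exu {X₁ X₂ P : A} {p₁ : P ⟶ X₁} {p₂ : P ⟶ X₂}
    (h : IsLimit (BinaryFan.mk p₁ p₂)) (Y : A) (f₁ : Y ⟶ X₁) (f₂ : Y ⟶ X₂) :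
    ∃! f : Y ⟶ P, f ≫ p₁ = f₁ ∧ f ≫ p₂ = f₂ := by
  obtain ⟨l, hl₁, hl₂⟩ := BinaryFan.IsLimit.lift' h f₁ f₂
  refine ⟨l, ⟨hl₁, hl₂⟩, fun m hm => ?_⟩
  exact BinaryFan.IsLimit.hom_ext h (by simpa using hm.1.trans hl₁.symm)
    (by simpa using hm.2.trans hl₂.symm)

theorem cart_term (D : NaturalSystem A) {P : A} (hPt : IsTerminal P)
    (hD : ∀ (X : A) (φ : X ⟶ P), Subsingleton (D.obj (FactObj.mk φ)))
    {X T : A} (hT : IsTerminal T) (f : X ⟶ T) :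
    Subsingleton (D.obj (FactObj.mk f)) := by
  have h : T ≅ P := hT.uniqueUpToIso hPt
  haveI := natPost_isIso f h.hom
  have hinj : Function.Injective (D.map (natPost f h.hom)) := (D_map_bij D _).1
  have := hD X (f ≫ h.hom)
  exact ⟨fun a b => hinj (Subsingleton.elim _ _)⟩

theorem cart_binary (D : NaturalSystem A) {P' X₁ X₂ : A}
    (ψ₁ : P' ⟶ X₁) (ψ₂ : P' ⟶ X₂) (hlim' : IsLimit (BinaryFan.mk ψ₁ ψ₂))
    (hD' : ∀ (X : A) (φ : X ⟶ P'), Function.Bijective (fun a : D.obj (FactObj.mk φ) =>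
      (D.map (natPost φ ψ₁) a, D.map (natPost φ ψ₂) a)))
    {X P : A} (p₁ : P ⟶ X₁) (p₂ : P ⟶ X₂) (hlim : IsLimit (BinaryFan.mk p₁ p₂))
    (f : X ⟶ P) :
    Function.Bijective (fun a : D.obj (FactObj.mk f) =>
      ((D.map (natPost f p₁) a, D.map (natPost f p₂) a) :
        D.obj (FactObj.mk (f ≫ p₁)) × D.obj (FactObj.mk (f ≫ p₂)))) := by
  obtain ⟨h, hp₁, hp₂⟩ : ∃ h : P ≅ P', h.hom ≫ ψ₁ = p₁ ∧ h.hom ≫ ψ₂ = p₂ :=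
    ⟨hlim.conePointUniqueUpToIso hlim',
      by simpa using hlim.conePointUniqueUpToIso_hom_comp hlim' ⟨WalkingPair.left⟩,
      by simpa using hlim.conePointUniqueUpToIso_hom_comp hlim' ⟨WalkingPair.right⟩⟩
  clear hlim
  subst hp₁ hp₂
  haveI := natPost_isIso f h.hom
  have hw : Function.Bijective (D.map (natPost f h.hom)) := D_map_bij D _
  have hK := hD' X (f ≫ h.hom)
  have he₁ := D_eqToHom_bij D
    (show FactObj.mk (f ≫ (h.hom ≫ ψ₁)) = FactObj.mk ((f ≫ h.hom) ≫ ψ₁) by rw [Category.assoc])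
  have he₂ := D_eqToHom_bij D
    (show FactObj.mk (f ≫ (h.hom ≫ ψ₂)) = FactObj.mk ((f ≫ h.hom) ≫ ψ₂) by rw [Category.assoc])
  have key : (Prod.map
        (D.map (eqToHom (show FactObj.mk (f ≫ (h.hom ≫ ψ₁)) = FactObj.mk ((f ≫ h.hom) ≫ ψ₁) by
          rw [Category.assoc])))
        (D.map (eqToHom (show FactObj.mk (f ≫ (h.hom ≫ ψ₂)) = FactObj.mk ((f ≫ h.hom) ≫ ψ₂) by
          rw [Category.assoc])))) ∘
      (fun a : D.obj (FactObj.mk f) =>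
        (D.map (natPost f (h.hom ≫ ψ₁)) a, D.map (natPost f (h.hom ≫ ψ₂)) a)) =
      (fun b : D.obj (FactObj.mk (f ≫ h.hom)) =>
        (D.map (natPost (f ≫ h.hom) ψ₁) b, D.map (natPost (f ≫ h.hom) ψ₂) b)) ∘
      (D.map (natPost f h.hom)) := by
    funext a
    simp only [Function.comp_apply, Prod.map_apply]
    rw [D_natPost_comp D f h.hom ψ₁ a, D_natPost_comp D f h.hom ψ₂ a]
  exact (Function.Bijective.of_comp_iff' (he₁.prodMap he₂)
    (fun a : D.obj (FactObj.mk f) =>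
      (D.map (natPost f (h.hom ≫ ψ₁)) a, D.map (natPost f (h.hom ≫ ψ₂)) a))).1
    (key ▸ hK.comp hw)

theorem bij_cons {n : ℕ} {α β : Type*} {γ : Fin (n+1) → Type*}
    (u : α → γ 0) (v : α → β) (w : β → ∀ j : Fin n, γ j.succ)
    (h1 : Function.Bijective (fun a => (u a, v a)))
    (h2 : Function.Bijective w) :
    Function.Bijective (fun a => (Fin.cons (u a) (w (v a)) : ∀ k, γ k)) := by
  have key : (fun a => (Fin.cons (u a) (w (v a)) : ∀ k, γ k)) =
      (Fin.consEquiv γ) ∘ (Prod.map id w) ∘ (fun a => (u a, v a)) := rfl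
  rw [key]
  exact (Fin.consEquiv γ).bijective.comp ((Function.bijective_id.prodMap h2).comp h1)

theorem prodD (D : NaturalSystem A) [HasFiniteProducts A]
    (hterm : ∀ {X T : A} (_ : IsTerminal T) (f : X ⟶ T), Subsingleton (D.obj (FactObj.mk f)))
    (hbin : ∀ {X P X₁ X₂ : A} (p₁ : P ⟶ X₁) (p₂ : P ⟶ X₂)
      (_ : IsLimit (BinaryFan.mk p₁ p₂)) (f : X ⟶ P),
      Function.Bijective (fun a : D.obj (FactObj.mk f) =>
        ((D.map (natPost f p₁) a, D.map (natPost f p₂) a) :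
          D.obj (FactObj.mk (f ≫ p₁)) × D.obj (FactObj.mk (f ≫ p₂))))) :
    ∀ (n : ℕ) (Xs : Fin n → A), ∃ (P : A) (π : ∀ k, P ⟶ Xs k),
      (∀ (Y : A) (fs : ∀ k, Y ⟶ Xs k), ∃! f : Y ⟶ P, ∀ k, f ≫ π k = fs k) ∧
      (∀ (Y : A) (φ : Y ⟶ P), Function.Bijective
        (fun a : D.obj (FactObj.mk φ) => fun k => D.map (natPost φ (π k)) a)) := by
  intro n
  induction n with
  | zero =>
    intro Xs
    refine ⟨⊤_ A, fun k => k.elim0, fun Y fs =>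
      ⟨terminal.from Y, fun k => k.elim0, fun m _ => terminal.hom_ext m _⟩, ?_⟩
    intro Y φ
    haveI : Subsingleton (D.obj (FactObj.mk φ)) := hterm terminalIsTerminal φ
    constructor
    · intro a b _
      exact Subsingleton.elim a b
    · intro x
      exact ⟨0, funext fun k => k.elim0⟩
  | succ n ih =>
    intro Xs
    obtain ⟨Q, ρ, hQe, hQb⟩ := ih (fun j => Xs j.succ)
    refine ⟨Xs 0 ⨯ Q, fun k => Fin.cases prod.fst (fun j => prod.snd ≫ ρ j) k, ?_, ?_⟩
    · intro Y fs
      obtain ⟨g, hg, hgu⟩ := hQe Y (fun j => fs j.succ)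
      refine ⟨prod.lift (fs 0) g, ?_, ?_⟩
      · intro k
        cases k using Fin.cases with
        | zero =>
          show prod.lift (fs 0) g ≫ prod.fst = fs 0
          exact prod.lift_fst _ _
        | succ j =>
          show prod.lift (fs 0) g ≫ (prod.snd ≫ ρ j) = fs j.succ
          rw [← Category.assoc, prod.lift_snd, hg j]
      · intro m hm
        have hm0 : m ≫ prod.fst = fs 0 := hm 0
        have hms : m ≫ prod.snd = g := by
          refine hgu (m ≫ prod.snd) fun j => ?_
          rw [Category.assoc]
          exact hm j.succ
        apply Limits.prod.hom_ext
        · rw [hm0, prod.lift_fst]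
        · rw [hms, prod.lift_snd]
    · intro Y φ
      have h1 := hbin prod.fst prod.snd (prodIsProd (Xs 0) Q) φ
      have h2 := hQb Y (φ ≫ prod.snd)
      have h2' : Function.Bijective (fun b : D.obj (FactObj.mk (φ ≫ prod.snd)) => fun j =>
          D.map (eqToHom (show FactObj.mk ((φ ≫ prod.snd) ≫ ρ j) =
              FactObj.mk (φ ≫ (prod.snd ≫ ρ j)) by rw [Category.assoc]))
            (D.map (natPost (φ ≫ prod.snd) (ρ j)) b)) :=
        (bij_pi_post _ (fun j => D_eqToHom_bij D _) _).2 h2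
      have key : (fun a : D.obj (FactObj.mk φ) => fun k =>
          D.map (natPost φ
            (Fin.cases (motive := fun k => (Xs 0 ⨯ Q) ⟶ Xs k)
              prod.fst (fun j => prod.snd ≫ ρ j) k)) a) =
          (Fin.consEquiv fun k => D.obj (FactObj.mk (φ ≫
              Fin.cases (motive := fun k => (Xs 0 ⨯ Q) ⟶ Xs k)
                prod.fst (fun j => prod.snd ≫ ρ j) k))) ∘
          (Prod.map id (fun b : D.obj (FactObj.mk (φ ≫ prod.snd)) => fun j =>
            D.map (eqToHom (show FactObj.mk ((φ ≫ prod.snd) ≫ ρ j) =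
                FactObj.mk (φ ≫ (prod.snd ≫ ρ j)) by rw [Category.assoc]))
              (D.map (natPost (φ ≫ prod.snd) (ρ j)) b))) ∘
          (fun a => (D.map (natPost φ prod.fst) a, D.map (natPost φ prod.snd) a)) := by
        funext a k
        cases k using Fin.cases with
        | zero => rfl
        | succ j =>
          show D.map (natPost φ (prod.snd ≫ ρ j)) a =
            D.map (eqToHom (show FactObj.mk ((φ ≫ prod.snd) ≫ ρ j) =
                FactObj.mk (φ ≫ (prod.snd ≫ ρ j)) by rw [Category.assoc]))
              (D.map (natPost (φ ≫ prod.snd) (ρ j)) (D.map (natPost φ prod.snd) a))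
          rw [D_natPost_comp D φ prod.snd (ρ j) a]
          rw [D_eqToHom_inv]
      rw [key]
      exact (Fin.consEquiv _).bijective.comp
        ((Function.bijective_id.prodMap h2').comp h1)

end ASide

section TSide


theorem torsor {B : Type u} [Bicategory.{w, v} B] [TrackGroupoid B]
    {n : ℕ} {Y P : B} {Xs : Fin n → B} (p : ∀ k, P ⟶ Xs k) (f g : Y ⟶ P)
    (detect : (∀ k, Nonempty ((f ≫ p k) ⟶ (g ≫ p k))) → Nonempty (f ⟶ g))
    (haut : Function.Bijective (fun η : f ⟶ f => fun k => η ▷ p k)) :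
    Function.Bijective (fun η : f ⟶ g => fun k => η ▷ p k) := by
  by_cases hne : ∀ k, Nonempty ((f ≫ p k) ⟶ (g ≫ p k))
  · obtain ⟨ξ⟩ := detect hne
    have hpost : ∀ k, Function.Bijective
        (fun χ : (f ≫ p k) ⟶ (f ≫ p k) => χ ≫ ξ ▷ p k) := by
      intro k
      constructor
      · intro a b hab
        rwa [cancel_mono] at hab
      · intro c
        exact ⟨c ≫ inv (ξ ▷ p k), by
          dsimp only
          rw [Category.assoc, IsIso.inv_hom_id, Category.comp_id]⟩
    have hpre : Function.Bijective (fun η : f ⟶ g => η ≫ inv ξ) := by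
      constructor
      · intro a b hab
        rwa [cancel_mono] at hab
      · intro c
        exact ⟨c ≫ ξ, by
          dsimp only
          rw [Category.assoc, IsIso.hom_inv_id, Category.comp_id]⟩
    have key : (fun η : f ⟶ g => fun k => η ▷ p k) =
        (fun x : ∀ k, (f ≫ p k) ⟶ (f ≫ p k) => fun k => x k ≫ ξ ▷ p k) ∘
        ((fun η : f ⟶ f => fun k => η ▷ p k) ∘ (fun η : f ⟶ g => η ≫ inv ξ)) := by
      funext η k
      simp only [Function.comp_apply]
      rw [← Bicategory.comp_whiskerRight]
      congr 1
      simp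
    rw [key]
    exact ((bij_pi_post _ hpost _).2 haut).comp hpre
  · push_neg at hne
    obtain ⟨k, hk⟩ := hne
    constructor
    · intro η₁ η₂ _
      exact (hk.false (η₁ ▷ p k)).elim
    · intro x
      exact (hk.false (x k)).elim

end TSide

section WBij


theorem whisk_bij_iff {Cb : Type u} (catA : CatOn.{v} Cb) (D : @NaturalSystem Cb catA.cat)
    {T : Type u} [Bicategory.{w, v} T] [Bicategory.Strict T] [TrackGroupoid T]
    {ι : T → Cb} (ext : TrackExtData catA D T ι)
    {n : ℕ} {Y P : T} {Xs : Fin n → T} (p : ∀ k, P ⟶ Xs k) (f : Y ⟶ P) :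
    Function.Bijective (fun η : f ⟶ f => fun k => η ▷ p k) ↔
    Function.Bijective (fun a : D.obj (mkA catA (ext.qmap f)) => fun k =>
      D.map (@natPost Cb catA.cat _ _ _ (ext.qmap f) (ext.qmap (p k))) a) := by
  letI : Category Cb := catA.cat
  refine Iff.symm (bij_transfer (ext.τ f) (ext.τ f).bijective
    (fun k => fun x => (ext.τ (f ≫ p k)) (D.map (eqToHom
      (show mkA catA (aComp catA (ext.qmap f) (ext.qmap (p k))) =
          mkA catA (ext.qmap (f ≫ p k)) by rw [ext.q_comp])) x))
    (fun k => (ext.τ (f ≫ p k)).bijective.comp (D_eqToHom_bij D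
      (show mkA catA (aComp catA (ext.qmap f) (ext.qmap (p k))) =
          mkA catA (ext.qmap (f ≫ p k)) by rw [ext.q_comp])))
    _ _ (fun a k => ext.τ_whiskR f (p k) a))

end WBij

/-- **Track theories and cartesian natural systems.**  A linear track extension
`D → T₁ ⇉ T₀ → A` has finite lax products (i.e. is a track theory: the functors
`Hom(Y,X) → Hom(Y,X₁) × ⋯ × Hom(Y,X_n)` induced by suitable `pᵢ : X ⟶ Xᵢ` are
equivalences of groupoids) if and only if `A` has finite products and `D` is a
cartesian natural system. -/
theorem stmt12 [Bicategory.{w, v} C] [Bicategory.Strict C] [TrackGroupoid C]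
    (catA : CatOn.{v} C) (D : @NaturalSystem C catA.cat)
    (ext : TrackExtData catA D C (fun X => X)) :
    (∀ (n : ℕ) (Xs : Fin n → C), ∃ (P : C) (p : ∀ k, P ⟶ Xs k),
      ∀ Y : C,
        (∀ fs : ∀ k, Y ⟶ Xs k, ∃ f : Y ⟶ P, ∀ k, Nonempty (f ≫ p k ⟶ fs k)) ∧
        (∀ f g : Y ⟶ P,
          Function.Bijective (fun η : f ⟶ g => fun k => η ▷ p k))) ↔
      (@HasFiniteProducts C catA.cat ∧ @IsCartesianNS C catA.cat D) := by
  constructor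
  · intro H
    -- the empty product: a terminal object
    obtain ⟨P₀, p₀, h₀⟩ := H 0 (fun k => k.elim0)
    have hterm : @IsTerminal C catA.cat P₀ := by
      refine @IsTerminal.ofUniqueHom C catA.cat P₀
        (fun X => ext.qmap ((h₀ X).1 (fun k => k.elim0)).choose) ?_
      intro X m
      obtain ⟨fm, hfm⟩ := ext.q_full m
      obtain ⟨η, -⟩ := ((h₀ X).2 fm ((h₀ X).1 (fun k => k.elim0)).choose).2
        (fun k => k.elim0)
      rw [← hfm]
      exact (ext.q_iff _ _).2 ⟨η⟩
    have hDterm : ∀ (X : C) (φ : AHom catA X P₀),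
        Subsingleton (D.obj (mkA catA φ)) := by
      intro X φ
      obtain ⟨g, hg⟩ := ext.q_full φ
      have hsub : Subsingleton (g ⟶ g) :=
        ⟨fun η η' => ((h₀ X).2 g g).1 (funext fun k => k.elim0)⟩
      subst hg
      exact ⟨fun a b => (ext.τ g).injective (Subsingleton.elim _ _)⟩
    -- binary products
    have bin : ∀ X₁ X₂ : C, ∃ (P : C) (ψ₁ : AHom catA P X₁) (ψ₂ : AHom catA P X₂),
        Nonempty (@IsLimit _ _ C catA.cat _ (@BinaryFan.mk C catA.cat X₁ X₂ P ψ₁ ψ₂)) ∧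
        (∀ (X : C) (φ : AHom catA X P),
          Function.Bijective (fun a : D.obj (mkA catA φ) =>
            (D.map (@natPost C catA.cat _ _ _ φ ψ₁) a,
             D.map (@natPost C catA.cat _ _ _ φ ψ₂) a))) := by
      intro X₁ X₂
      obtain ⟨P, p, h⟩ := H 2 (Fin.cons X₁ fun _ => X₂)
      refine ⟨P, ext.qmap (p 0), ext.qmap (p 1), ?_, ?_⟩
      · refine @exu_isLimit C catA.cat X₁ X₂ P _ _ ?_
        intro Y f₁ f₂
        obtain ⟨g₁, hg₁⟩ := ext.q_full f₁
        obtain ⟨g₂, hg₂⟩ := ext.q_full f₂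
        obtain ⟨f, hf⟩ := (h Y).1
          ((Fin.cons g₁ (fun _ => g₂) :
            ∀ k : Fin 2, Y ⟶ (Fin.cons X₁ (fun _ => X₂) : Fin 2 → C) k))
        have hfac : ∀ k : Fin 2, aComp catA (ext.qmap f) (ext.qmap (p k)) =
            ext.qmap ((Fin.cons g₁ (fun _ => g₂) :
              ∀ k : Fin 2, Y ⟶ (Fin.cons X₁ (fun _ => X₂) : Fin 2 → C) k) k) := by
          intro k
          rw [← ext.q_comp]
          exact (ext.q_iff _ _).2 (hf k)
        refine ⟨ext.qmap f, ⟨?_, ?_⟩, ?_⟩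
        · exact (hfac 0).trans hg₁
        · exact (hfac 1).trans hg₂
        · intro m hm
          obtain ⟨gm, hgm⟩ := ext.q_full m
          have e : ∀ k : Fin 2, aComp catA m (ext.qmap (p k)) =
              aComp catA (ext.qmap f) (ext.qmap (p k)) := by
            intro k
            cases k using Fin.cases with
            | zero =>
              exact hm.1.trans (hg₁.symm.trans (hfac 0).symm)
            | succ j =>
              obtain rfl : j = 0 := Subsingleton.elim j 0
              exact hm.2.trans (hg₂.symm.trans (hfac 1).symm)
          have trk : ∀ k : Fin 2, Nonempty ((gm ≫ p k) ⟶ (f ≫ p k)) := by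
            intro k
            refine (ext.q_iff _ _).1 ?_
            rw [ext.q_comp, ext.q_comp, hgm]
            exact e k
          obtain ⟨η, -⟩ := ((h Y).2 gm f).2 (fun k => (trk k).some)
          rw [← hgm]
          exact (ext.q_iff _ _).2 ⟨η⟩
      · intro X φ
        obtain ⟨g, hg⟩ := ext.q_full φ
        have hb := (whisk_bij_iff catA D ext p g).1 ((h X).2 g g)
        subst hg
        have key : (fun a : D.obj (mkA catA (ext.qmap g)) =>
            (D.map (@natPost C catA.cat _ _ _ (ext.qmap g) (ext.qmap (p 0))) a,
             D.map (@natPost C catA.cat _ _ _ (ext.qmap g) (ext.qmap (p 1))) a)) =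
            (piFinTwoEquiv fun k =>
              D.obj (mkA catA (aComp catA (ext.qmap g) (ext.qmap (p k))))) ∘
            (fun a => fun k =>
              D.map (@natPost C catA.cat _ _ _ (ext.qmap g) (ext.qmap (p k))) a) := rfl
        refine key ▸ ?_
        exact (piFinTwoEquiv _).bijective.comp hb
    have pairlim : ∀ X₁ X₂ : C, @HasLimit _ _ C catA.cat (@pair C catA.cat X₁ X₂) := by
      intro X₁ X₂
      obtain ⟨P, ψ₁, ψ₂, ⟨hlim⟩, -⟩ := bin X₁ X₂
      exact @HasLimit.mk _ _ C catA.cat (@pair C catA.cat X₁ X₂)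
        (@LimitCone.mk _ _ C catA.cat (@pair C catA.cat X₁ X₂)
          (@BinaryFan.mk C catA.cat X₁ X₂ P ψ₁ ψ₂) hlim)
    have hbp : @HasBinaryProducts C catA.cat :=
      @hasBinaryProducts_of_hasLimit_pair C catA.cat (fun {X₁ X₂} => pairlim X₁ X₂)
    have hfp : @HasFiniteProducts C catA.cat :=
      @hasFiniteProducts_of_has_binary_and_terminal C catA.cat hbp
        (@IsTerminal.hasTerminal C catA.cat P₀ hterm)
    refine ⟨hfp, ?_, ?_⟩
    · intro X T hT f
      exact @cart_term C catA.cat D P₀ hterm hDterm X T hT f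
    · intro X P X₁ X₂ p₁ p₂ hl f
      obtain ⟨P', ψ₁, ψ₂, ⟨hlim'⟩, hD'⟩ := bin X₁ X₂
      exact @cart_binary C catA.cat D P' X₁ X₂ ψ₁ ψ₂ hlim' hD' X P p₁ p₂ hl f
  · rintro ⟨hfp, hcart⟩
    intro n Xs
    obtain ⟨P, π, hexu, hbij⟩ := @prodD C catA.cat D hfp
      (fun {X T} hT f => hcart.1 hT f)
      (fun {X P X₁ X₂} p₁ p₂ hl f => hcart.2 p₁ p₂ hl f) n Xs
    obtain ⟨p, hq⟩ : ∃ p : ∀ k, P ⟶ Xs k, ∀ k, ext.qmap (p k) = π k :=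
      ⟨fun k => (ext.q_full (π k)).choose, fun k => (ext.q_full (π k)).choose_spec⟩
    have hπ : π = fun k => ext.qmap (p k) := funext fun k => (hq k).symm
    subst hπ
    refine ⟨P, p, fun Y => ⟨?_, ?_⟩⟩
    · intro fs
      obtain ⟨φ, hφ, -⟩ := hexu Y (fun k => ext.qmap (fs k))
      obtain ⟨f, hf⟩ := ext.q_full φ
      refine ⟨f, fun k => (ext.q_iff _ _).1 ?_⟩
      rw [ext.q_comp, hf]
      exact hφ k
    · intro f g
      refine torsor p f g ?_ ?_
      · intro hk
        refine (ext.q_iff f g).1 ?_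
        have e : ∀ k, aComp catA (ext.qmap f) (ext.qmap (p k)) =
            aComp catA (ext.qmap g) (ext.qmap (p k)) := by
          intro k
          have h2 := (ext.q_iff _ _).2 (hk k)
          rw [ext.q_comp, ext.q_comp] at h2
          exact h2
        obtain ⟨m, hm, hu⟩ := hexu Y (fun k => aComp catA (ext.qmap g) (ext.qmap (p k)))
        rw [hu (ext.qmap f) (fun k => e k), hu (ext.qmap g) (fun k => rfl)]
      · exact (whisk_bij_iff catA D ext p f).2 (hbij Y (ext.qmap f))
end

section
/- Any morphism in the category Tracks(C;D) of linear track extensions of a small category C by a natural system D is a weak equivalence of track categories: it is identity on objects and induces equivalences of all Hom-groupoids. -/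
open CategoryTheory CategoryTheory.Limits Bicategory

universe w v u

variable {C : Type u}

/-- A type synonym used to carry a second track-category structure on the same
objects. -/
def Mirror (C : Type u) : Type u := C

/-- The identity-on-objects correspondence. -/
def toMirror : C → Mirror C := fun X => X

lemma map_eqToHom_bij {J : Type*} [Category J] (D : J ⥤ AddCommGrpCat.{v})
    {A B : J} (h : A = B) : Function.Bijective (D.map (eqToHom h)) := by
  subst h
  rw [eqToHom_refl, D.map_id]
  exact ⟨fun a b hab => hab, fun a => ⟨a, rfl⟩⟩

lemma tau_zero {C : Type u} (catA : CatOn.{v} C) (D : @NaturalSystem C catA.cat)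
    {T : Type u} [Bicategory.{w, v} T] [Bicategory.Strict T] [TrackGroupoid T]
    {ι : T → C} (ext : TrackExtData catA D T ι) {X Y : T} (f : X ⟶ Y) :
    ext.τ f 0 = 𝟙 f := by
  have h := ext.τ_add f 0 0
  rw [add_zero] at h
  have h2 : ext.τ f 0 ≫ 𝟙 f = ext.τ f 0 ≫ ext.τ f 0 := by
    rw [Category.comp_id, ← h]
  exact ((cancel_epi (ext.τ f 0)).mp h2).symm

/-- **Morphisms of linear track extensions are weak equivalences.**
Let `T` and `T'` be linear track extensions of a small category `A` by a natural
system `D`, and let `F` be a morphism of linear track extensions: a track functor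
(given by `F₁` on 1-cells and `F₂` on tracks) which is the identity on objects and
compatible with the structure functors `q`, `q'` and with `τ`, `τ'`.  Then `F` is a
weak equivalence: it is (trivially) surjective on objects, every 1-cell of `T'` is
homotopic to one in the image of `F₁`, and `F₂` is bijective on tracks; that is, the
induced functors of hom-groupoids are equivalences. -/
theorem stmt14 [Bicategory.{w, v} C] [Bicategory.Strict C] [TrackGroupoid C]
    [Bicategory.{w, v} (Mirror C)] [Bicategory.Strict (Mirror C)]
    [TrackGroupoid (Mirror C)]
    (catA : CatOn.{v} C) (D : @NaturalSystem C catA.cat)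
    (ext : TrackExtData catA D C (fun X => X))
    (ext' : TrackExtData catA D (Mirror C) (fun X => (X : C)))
    (F₁ : ∀ {X Y : C}, (X ⟶ Y) → (toMirror X ⟶ toMirror Y))
    (F₂ : ∀ {X Y : C} {f g : X ⟶ Y}, (f ⟶ g) → (F₁ f ⟶ F₁ g))
    (hF_id1 : ∀ X : C, F₁ (𝟙 X) = 𝟙 (toMirror X))
    (hF_comp1 : ∀ {X Y Z : C} (f : X ⟶ Y) (g : Y ⟶ Z), F₁ (f ≫ g) = F₁ f ≫ F₁ g)
    (hF_id2 : ∀ {X Y : C} (f : X ⟶ Y), F₂ (𝟙 f) = 𝟙 (F₁ f))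
    (hF_comp2 : ∀ {X Y : C} {f g h : X ⟶ Y} (ξ : f ⟶ g) (η : g ⟶ h),
      F₂ (ξ ≫ η) = F₂ ξ ≫ F₂ η)
    (hF_whiskL : ∀ {W X Y : C} (e : W ⟶ X) {f g : X ⟶ Y} (ξ : f ⟶ g),
      F₂ (e ◁ ξ) = eqToHom (hF_comp1 e f) ≫ (F₁ e ◁ F₂ ξ) ≫
        eqToHom (hF_comp1 e g).symm)
    (hF_whiskR : ∀ {X Y Z : C} {f g : X ⟶ Y} (ξ : f ⟶ g) (h : Y ⟶ Z),
      F₂ (ξ ▷ h) = eqToHom (hF_comp1 f h) ≫ (F₂ ξ ▷ F₁ h) ≫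
        eqToHom (hF_comp1 g h).symm)
    (hFq : ∀ {X Y : C} (f : X ⟶ Y), ext'.qmap (F₁ f) = ext.qmap f)
    (hFτ : ∀ {X Y : C} (f : X ⟶ Y) (a : D.obj (mkA catA (ext.qmap f))),
      F₂ (ext.τ f a) = ext'.τ (F₁ f) (D.map (eqToHom (by rw [hFq f]; rfl)) a)) :
    (∀ X' : Mirror C, ∃ X : C, toMirror X = X') ∧
    (∀ (X Y : C) (f' : toMirror X ⟶ toMirror Y),
      ∃ f : X ⟶ Y, Nonempty (F₁ f ⟶ f')) ∧
    (∀ (X Y : C) (f g : X ⟶ Y),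
      Function.Bijective (fun ξ : f ⟶ g => F₂ ξ)) := by
  refine ⟨fun X' => ⟨X', rfl⟩, ?_, ?_⟩
  · intro X Y f'
    obtain ⟨f, hf⟩ := ext.q_full (ext'.qmap f')
    refine ⟨f, (ext'.q_iff (F₁ f) f').1 ?_⟩
    rw [hFq f, hf]; rfl
  · intro X Y f g
    constructor
    · intro ξ η h
      simp only at h
      have hinv : F₂ (inv η) = inv (F₂ η) :=
        (IsIso.inv_eq_of_hom_inv_id (by rw [← hF_comp2, IsIso.hom_inv_id, hF_id2])).symm
      have key : F₂ (ξ ≫ inv η) = 𝟙 (F₁ f) := by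
        rw [hF_comp2, h, hinv, IsIso.hom_inv_id]
      set a := (ext.τ f).symm (ξ ≫ inv η) with ha
      have hτa : ext.τ f a = ξ ≫ inv η := (ext.τ f).apply_symm_apply _
      have heq : ext'.τ (F₁ f)
          (D.map (eqToHom (by rw [hFq f]; rfl)) a) = ext'.τ (F₁ f) 0 := by
        rw [← hFτ, hτa, key]; exact (tau_zero catA D ext' (F₁ f)).symm
      have hD : D.map (eqToHom (by rw [hFq f]; rfl :
          mkA catA (ext.qmap f) = mkA catA (ext'.qmap (F₁ f)))) a = 0 :=
        (ext'.τ (F₁ f)).injective heq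
      have ha0 : a = 0 := by
        apply (map_eqToHom_bij D (by rw [hFq f]; rfl :
          mkA catA (ext.qmap f) = mkA catA (ext'.qmap (F₁ f)))).1
        rw [hD, map_zero]
      have h1 : ξ ≫ inv η = 𝟙 f := by
        rw [← hτa, ha0, tau_zero]
      calc ξ = (ξ ≫ inv η) ≫ η := by simp
        _ = η := by rw [h1, Category.id_comp]
    · intro ζ
      have hq : ext.qmap f = ext.qmap g := by
        rw [← hFq f, ← hFq g]
        exact (ext'.q_iff _ _).2 ⟨ζ⟩
      obtain ⟨ξ₀⟩ := (ext.q_iff f g).1 hq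
      obtain ⟨b, hb⟩ : ∃ b, ext'.τ (F₁ f) b = ζ ≫ inv (F₂ ξ₀) :=
        ⟨(ext'.τ (F₁ f)).symm _, (ext'.τ (F₁ f)).apply_symm_apply _⟩
      obtain ⟨a, ha⟩ := (map_eqToHom_bij D (by rw [hFq f]; rfl :
          mkA catA (ext.qmap f) = mkA catA (ext'.qmap (F₁ f)))).2 b
      refine ⟨ext.τ f a ≫ ξ₀, ?_⟩
      simp only
      rw [hF_comp2, hFτ]
      rw [show D.map (eqToHom (by rw [hFq f]; rfl)) a = b from ha, hb]
      simp
end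

section
/- Let T be a track category (category enriched in groupoids) and q : T₀ → T_ho the quotient functor to the homotopy category. Then pullback q* along q induces a fully faithful functor from the category of natural systems on T_ho to the category of T-natural systems, whose essential image consists exactly of the inert T-natural systems (those (D,∇) with ∇_ε = id for every track ε : f ⇒ f). -/
open CategoryTheory CategoryTheory.Limits Bicategory

universe w v u

lemma natPost_eqToHom {D : Type u} [Category.{v} D] {x y z : D} {a a' : x ⟶ y}
    (h : a = a') (b : y ⟶ z) :
    natPost a b ≫ eqToHom (by rw [h]) =
      (eqToHom (by rw [h]) : FactObj.mk a ⟶ FactObj.mk a') ≫ natPost a' b := by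
  subst h; simp

lemma natPre_eqToHom {D : Type u} [Category.{v} D] {x y z : D} (a : x ⟶ y)
    {b b' : y ⟶ z} (h : b = b') :
    natPre a b ≫ eqToHom (by rw [h]) =
      (eqToHom (by rw [h]) : FactObj.mk b ⟶ FactObj.mk b') ≫ natPre a b' := by
  subst h; simp

lemma natPost_eqToHom' {D : Type u} [Category.{v} D] {x y z : D} (a : x ⟶ y)
    {b b' : y ⟶ z} (h : b = b') :
    natPost a b ≫ eqToHom (by rw [h]) = natPost a b' := by
  subst h; simp

lemma natPre_eqToHom' {D : Type u} [Category.{v} D] {x y z : D} {a a' : x ⟶ y}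
    (h : a = a') (b : y ⟶ z) :
    natPre a b ≫ eqToHom (by rw [h]) = natPre a' b := by
  subst h; simp

variable {C : Type u} [Bicategory.{w, v} C] [Bicategory.Strict C] [TrackGroupoid C]

/-- The homotopy relation on 1-cells: existence of a track. -/
def htpySetoid (X Y : C) : Setoid (X ⟶ Y) where
  r f g := Nonempty (f ⟶ g)
  iseqv := ⟨fun f => ⟨𝟙 f⟩, fun ⟨η⟩ => ⟨inv η⟩, fun ⟨η⟩ ⟨θ⟩ => ⟨η ≫ θ⟩⟩

/-- The homotopy category of a track category. -/
structure Ho (C : Type u) where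
  obj : C

instance : Category.{v} (Ho C) where
  Hom X Y := Quotient (htpySetoid X.obj Y.obj)
  id X := Quotient.mk _ (𝟙 X.obj)
  comp {X Y Z} := Quotient.map₂ (· ≫ ·)
    (fun {f f'} hf {g g'} hg => hf.elim fun η => hg.elim fun θ => ⟨η ▷ g ≫ f' ◁ θ⟩)
  id_comp f := Quotient.inductionOn f fun f => congrArg (Quotient.mk _) (Category.id_comp f)
  comp_id f := Quotient.inductionOn f fun f => congrArg (Quotient.mk _) (Category.comp_id f)
  assoc f g h := Quotient.inductionOn₃ f g h fun f g h =>
    congrArg (Quotient.mk _) (Category.assoc f g h)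

/-- The quotient functor `q : T₀ ⥤ T_ho`. -/
def hoQuotient : C ⥤ Ho C where
  obj X := ⟨X⟩
  map f := Quotient.mk _ f
  map_id _ := rfl
  map_comp _ _ := rfl

/-- The induced functor between factorization categories `F T₀ ⥤ F T_ho`. -/
def hoFact : FactObj C ⥤ FactObj (Ho C) where
  obj F := FactObj.mk ((hoQuotient (C := C)).map F.hom)
  map {F G} p := ⟨((hoQuotient (C := C)).map p.1.1, (hoQuotient (C := C)).map p.1.2), by
    exact congrArg (Quotient.mk (htpySetoid _ _)) p.2⟩
  map_id _ := by apply Subtype.ext; rfl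
  map_comp _ _ := by apply Subtype.ext; rfl

/-- A `T`-natural system on a track category `T`: a natural system `D` on `T₀`
together with transport isomorphisms `∇_ξ : D_f ⟶ D_g` along tracks `ξ : f ⇒ g`,
functorial in `ξ` and compatible with pre- and postcomposition (conditions
(i)–(iv)). -/
structure TNatSys (C : Type u) [Bicategory.{w, v} C] [Bicategory.Strict C]
    [TrackGroupoid C] where
  D : NaturalSystem C
  nabla : ∀ {X Y : C} {f g : X ⟶ Y}, (f ⟶ g) →
    (D.obj (FactObj.mk f) ⟶ D.obj (FactObj.mk g))
  nabla_id : ∀ {X Y : C} (f : X ⟶ Y), nabla (𝟙 f) = 𝟙 _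
  nabla_comp : ∀ {X Y : C} {f g h : X ⟶ Y} (ξ : f ⟶ g) (η : g ⟶ h),
    nabla (ξ ≫ η) = nabla ξ ≫ nabla η
  natural_post : ∀ {X Y Z : C} {g g₁ : X ⟶ Y} (ξ : g ⟶ g₁) (f : Y ⟶ Z),
    D.map (natPost g f) ≫ nabla (ξ ▷ f) = nabla ξ ≫ D.map (natPost g₁ f)
  natural_pre : ∀ {W X Y : C} (h : W ⟶ X) {g g₁ : X ⟶ Y} (ξ : g ⟶ g₁),
    D.map (natPre h g) ≫ nabla (h ◁ ξ) = nabla ξ ≫ D.map (natPre h g₁)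
  outer_post : ∀ {X Y Z : C} (g : X ⟶ Y) {f f₁ : Y ⟶ Z} (ξ : f ⟶ f₁),
    D.map (natPost g f) ≫ nabla (g ◁ ξ) = D.map (natPost g f₁)
  outer_pre : ∀ {W X Y : C} {h h₁ : W ⟶ X} (η : h ⟶ h₁) (g : X ⟶ Y),
    D.map (natPre h g) ≫ nabla (η ▷ g) = D.map (natPre h₁ g)

/-- Morphisms of `T`-natural systems. -/
@[ext]
structure TNatHom (P Q : TNatSys C) where
  t : P.D ⟶ Q.D
  compat : ∀ {X Y : C} {f g : X ⟶ Y} (ξ : f ⟶ g),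
    P.nabla ξ ≫ t.app (FactObj.mk g) = t.app (FactObj.mk f) ≫ Q.nabla ξ

/-- An inert `T`-natural system: transport along automorphism tracks is trivial. -/
def TNatSys.Inert (P : TNatSys C) : Prop :=
  ∀ {X Y : C} {f : X ⟶ Y} (ε' : f ⟶ f), P.nabla ε' = 𝟙 _

lemma hoMap_eq {X Y : C} {f g : X ⟶ Y} (ξ : f ⟶ g) :
    (hoQuotient (C := C)).map f = (hoQuotient (C := C)).map g :=
  Quotient.sound ⟨ξ⟩

lemma hoFact_natPost {X Y Z : C} (g : X ⟶ Y) (f : Y ⟶ Z) :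
    hoFact.map (natPost g f) =
      natPost ((hoQuotient (C := C)).map g) ((hoQuotient (C := C)).map f) := rfl

lemma hoFact_natPre {W X Y : C} (h : W ⟶ X) (g : X ⟶ Y) :
    hoFact.map (natPre h g) =
      natPre ((hoQuotient (C := C)).map h) ((hoQuotient (C := C)).map g) := rfl

lemma homotopyClassEq {X Y : C} {f g : X ⟶ Y} (ξ : f ⟶ g) :
    (FactObj.mk ((hoQuotient (C := C)).map f)) = FactObj.mk ((hoQuotient (C := C)).map g) :=
  congrArg (fun t : ((⟨X⟩ : Ho C) ⟶ ⟨Y⟩) => FactObj.mk t) (Quotient.sound ⟨ξ⟩)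

/-- The pullback of a natural system on the homotopy category to a `T`-natural
system, with transport given by the identification of homotopy classes. -/
def qstar (E : NaturalSystem (Ho C)) : TNatSys C where
  D := hoFact ⋙ E
  nabla ξ := E.map (eqToHom (homotopyClassEq ξ))
  nabla_id := by
    intro X Y f
    show E.map (eqToHom (homotopyClassEq (𝟙 f))) = 𝟙 _
    rw [show homotopyClassEq (𝟙 f) = rfl from rfl]
    simp
  nabla_comp := by
    intro X Y f g h ξ η
    show E.map _ = E.map _ ≫ E.map _
    rw [← E.map_comp]
    congr 1
    exact (eqToHom_trans _ _).symm
  natural_post := by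
    intro X Y Z g g₁ ξ f
    dsimp only [Functor.comp_map]
    rw [← E.map_comp, ← E.map_comp, hoFact_natPost, hoFact_natPost]
    exact congrArg E.map (natPost_eqToHom (hoMap_eq ξ) _)
  natural_pre := by
    intro W X Y h g g₁ ξ
    dsimp only [Functor.comp_map]
    rw [← E.map_comp, ← E.map_comp, hoFact_natPre, hoFact_natPre]
    exact congrArg E.map (natPre_eqToHom _ (hoMap_eq ξ))
  outer_post := by
    intro X Y Z g f f₁ ξ
    dsimp only [Functor.comp_map]
    rw [← E.map_comp, hoFact_natPost, hoFact_natPost]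
    exact congrArg E.map (natPost_eqToHom' _ (hoMap_eq ξ))
  outer_pre := by
    intro W X Y h h₁ η g
    dsimp only [Functor.comp_map]
    rw [← E.map_comp, hoFact_natPre, hoFact_natPre]
    exact congrArg E.map (natPre_eqToHom' (hoMap_eq η) _)

/-- The morphism of `T`-natural systems induced by a morphism of natural systems on
the homotopy category. -/
def qstarHom {E E' : NaturalSystem (Ho C)} (ψ : E ⟶ E') :
    TNatHom (qstar E) (qstar E') where
  t := { app := fun F => ψ.app (hoFact.obj F),
         naturality := fun _ _ p => ψ.naturality (hoFact.map p) }
  compat ξ := ψ.naturality (eqToHom (homotopyClassEq ξ))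

/-! ### Auxiliary machinery for the proof -/

section Aux15

/-- Shorthand for the quotient functor on 1-cells. -/
abbrev qmap {X Y : C} (f : X ⟶ Y) : (⟨X⟩ : Ho C) ⟶ ⟨Y⟩ := (hoQuotient (C := C)).map f

lemma FactObj.comp_fst {D : Type*} [Category D] {F G H : FactObj D} (u : F ⟶ G) (v : G ⟶ H) :
    (u ≫ v).1.1 = v.1.1 ≫ u.1.1 := rfl

lemma FactObj.comp_snd {D : Type*} [Category D] {F G H : FactObj D} (u : F ⟶ G) (v : G ⟶ H) :
    (u ≫ v).1.2 = u.1.2 ≫ v.1.2 := rfl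

lemma FactObj.eqToHom_fst {D : Type*} [Category D] {F G : FactObj D} (h : F = G) :
    (eqToHom h).1.1 = eqToHom (congrArg FactObj.src h).symm := by subst h; rfl

lemma FactObj.eqToHom_snd {D : Type*} [Category D] {F G : FactObj D} (h : F = G) :
    (eqToHom h).1.2 = eqToHom (congrArg FactObj.tgt h) := by subst h; rfl

/-- The canonical morphism `f ⟶ a ≫ f ≫ b` in the factorization category. -/
def fmor {D : Type*} [Category D] {X Y X' Y' : D} (f : X ⟶ Y) (a : X' ⟶ X) (b : Y ⟶ Y') :
    FactObj.mk f ⟶ FactObj.mk (a ≫ f ≫ b) := ⟨(a, b), rfl⟩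

/-- Every object of the factorization category of `Ho C` is (the image of) a chosen
representative. -/
lemma outEq (F : FactObj (Ho C)) : FactObj.mk (qmap (Quotient.out F.hom)) = F :=
  congrArg (fun t : (F.src ⟶ F.tgt) => FactObj.mk t) (Quotient.out_eq F.hom)

variable {E E' : NaturalSystem (Ho C)}

/-- The candidate component of the natural transformation `E ⟶ E'` induced by a
morphism of pulled-back `T`-natural systems. -/
noncomputable def appPhi (Φ : TNatHom (qstar E) (qstar E')) (F : FactObj (Ho C)) :
    E.obj F ⟶ E'.obj F :=
  E.map (eqToHom (outEq F).symm) ≫ Φ.t.app (FactObj.mk (Quotient.out F.hom)) ≫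
    E'.map (eqToHom (outEq F))

lemma rep_indep (Φ : TNatHom (qstar E) (qstar E')) {X Y : C} {f g : X ⟶ Y} (ξ : f ⟶ g)
    {F : FactObj (Ho C)} (hf : FactObj.mk (qmap f) = F) (hg : FactObj.mk (qmap g) = F) :
    E.map (eqToHom hf.symm) ≫ Φ.t.app (FactObj.mk f) ≫ E'.map (eqToHom hf) =
      E.map (eqToHom hg.symm) ≫ Φ.t.app (FactObj.mk g) ≫ E'.map (eqToHom hg) := by
  have key : E.map (eqToHom (homotopyClassEq ξ)) ≫ Φ.t.app (FactObj.mk g) =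
      Φ.t.app (FactObj.mk f) ≫ E'.map (eqToHom (homotopyClassEq ξ)) := Φ.compat ξ
  have key' : Φ.t.app (FactObj.mk f) =
      E.map (eqToHom (homotopyClassEq ξ)) ≫ Φ.t.app (FactObj.mk g) ≫
        E'.map (eqToHom (homotopyClassEq ξ).symm) := by
    erw [← Category.assoc, key, Category.assoc, ← E'.map_comp, eqToHom_trans, eqToHom_refl,
      E'.map_id]
    exact (Category.comp_id _).symm
  rw [key']
  erw [← Category.assoc, ← Category.assoc, ← E.map_comp, eqToHom_trans]
  erw [Category.assoc, Category.assoc, ← E'.map_comp, eqToHom_trans]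
  rfl

lemma appPhi_eq (Φ : TNatHom (qstar E) (qstar E')) {X Y : C} (f : X ⟶ Y)
    {F : FactObj (Ho C)} (hF : FactObj.mk (qmap f) = F) :
    appPhi Φ F = E.map (eqToHom hF.symm) ≫ Φ.t.app (FactObj.mk f) ≫ E'.map (eqToHom hF) := by
  subst hF
  obtain ⟨ξ⟩ := Quotient.exact (Quotient.out_eq (qmap f))
  exact rep_indep Φ ξ (outEq (FactObj.mk (qmap f))) rfl

lemma hom_eq_fmor {X Y X' Y' : C} (f : X ⟶ Y) (a : X' ⟶ X) (b : Y ⟶ Y')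
    (p : FactObj.mk (qmap f) ⟶ FactObj.mk (qmap (a ≫ f ≫ b)))
    (ha : p.1.1 = qmap a) (hb : p.1.2 = qmap b) :
    p = hoFact.map (fmor f a b) := by
  apply Subtype.ext
  exact Prod.ext ha hb

lemma appPhi_natural (Φ : TNatHom (qstar E) (qstar E')) {F G : FactObj (Ho C)} (p : F ⟶ G) :
    E.map p ≫ appPhi Φ G = appPhi Φ F ≫ E'.map p := by
  set f := Quotient.out F.hom with hf
  set a := Quotient.out p.1.1 with hadef
  set b := Quotient.out p.1.2 with hbdef
  have h1 : qmap (a ≫ f ≫ b) = G.hom := by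
    calc qmap (a ≫ f ≫ b) = p.1.1 ≫ F.hom ≫ p.1.2 := by
          show qmap a ≫ qmap f ≫ qmap b = _
          rw [show qmap a = p.1.1 from Quotient.out_eq _,
            show qmap f = F.hom from Quotient.out_eq _,
            show qmap b = p.1.2 from Quotient.out_eq _]
      _ = G.hom := p.2.symm
  have hG : FactObj.mk (qmap (a ≫ f ≫ b)) = G :=
    congrArg (fun t : G.src ⟶ G.tgt => FactObj.mk t) h1
  have e1 : (eqToHom hG.symm).1.1 = 𝟙 G.src := by
    rw [FactObj.eqToHom_fst]; rfl
  have e2 : (eqToHom (outEq F)).1.1 = 𝟙 F.src := by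
    rw [FactObj.eqToHom_fst]; rfl
  have e3 : (eqToHom (outEq F)).1.2 = 𝟙 F.tgt := by
    rw [FactObj.eqToHom_snd]; rfl
  have e4 : (eqToHom hG.symm).1.2 = 𝟙 G.tgt := by
    rw [FactObj.eqToHom_snd]; rfl
  have hp : eqToHom (outEq F) ≫ p ≫ eqToHom hG.symm = hoFact.map (fmor f a b) := by
    apply hom_eq_fmor
    · show ((eqToHom hG.symm).1.1 ≫ p.1.1) ≫ (eqToHom (outEq F)).1.1 = qmap a
      rw [e1, e2, Category.id_comp, Category.comp_id]
      exact (Quotient.out_eq p.1.1).symm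
    · show (eqToHom (outEq F)).1.2 ≫ p.1.2 ≫ (eqToHom hG.symm).1.2 = qmap b
      rw [e3, e4, Category.id_comp, Category.comp_id]
      exact (Quotient.out_eq p.1.2).symm
  have hp' : p = eqToHom (outEq F).symm ≫ hoFact.map (fmor f a b) ≫ eqToHom hG := by
    have gen : ∀ {A B A' B' : FactObj (Ho C)} (k1 : A' = A) (k2 : B = B') (q : A ⟶ B),
        q = eqToHom k1.symm ≫ (eqToHom k1 ≫ q ≫ eqToHom k2) ≫ eqToHom k2.symm := by
      intro A B A' B' k1 k2 q; subst k1; subst k2; simp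
    rw [← hp]; exact gen _ _ p
  have nat : E.map (hoFact.map (fmor f a b)) ≫ Φ.t.app (FactObj.mk (a ≫ f ≫ b)) =
      Φ.t.app (FactObj.mk f) ≫ E'.map (hoFact.map (fmor f a b)) :=
    Φ.t.naturality (fmor f a b)
  rw [hp', appPhi_eq Φ (a ≫ f ≫ b) hG, appPhi_eq Φ f (outEq F)]
  simp only [Functor.map_comp, Category.assoc]
  have c1 : E.map (eqToHom hG) ≫ E.map (eqToHom hG.symm) ≫
      Φ.t.app (FactObj.mk (a ≫ f ≫ b)) ≫ E'.map (eqToHom hG) =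
      Φ.t.app (FactObj.mk (a ≫ f ≫ b)) ≫ E'.map (eqToHom hG) := by
    rw [← Functor.map_comp_assoc, eqToHom_trans, eqToHom_refl, E.map_id, Category.id_comp]
    rfl
  have c2 : E'.map (eqToHom (outEq F)) ≫ E'.map (eqToHom (outEq F).symm) ≫
      E'.map (hoFact.map (fmor f a b)) ≫ E'.map (eqToHom hG) =
      E'.map (hoFact.map (fmor f a b)) ≫ E'.map (eqToHom hG) := by
    rw [← Functor.map_comp_assoc, eqToHom_trans, eqToHom_refl, E'.map_id, Category.id_comp]
    rfl
  erw [E.map_comp, E'.map_comp]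
  simp only [Category.assoc]
  erw [c1, Category.assoc, c2, reassoc_of% nat]
  erw [Category.assoc]

variable (P : TNatSys C)

/-- Transport along an equality of homotopy classes (for an inert system this is
independent of all choices). -/
noncomputable def trP {X Y : C} {f g : X ⟶ Y} (h : qmap f = qmap g) :
    P.D.obj (FactObj.mk f) ⟶ P.D.obj (FactObj.mk g) :=
  P.nabla (Quotient.exact h).some

variable {P} (hP : P.Inert)
include hP

lemma nabla_indep {X Y : C} {f g : X ⟶ Y} (ξ η : f ⟶ g) : P.nabla ξ = P.nabla η := by
  have hξ : ξ = η ≫ (inv η ≫ ξ) := (IsIso.hom_inv_id_assoc η ξ).symm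
  rw [hξ, P.nabla_comp, hP (inv η ≫ ξ), Category.comp_id]

lemma trP_eq {X Y : C} {f g : X ⟶ Y} (h : qmap f = qmap g) (ξ : f ⟶ g) :
    trP P h = P.nabla ξ := nabla_indep hP _ ξ

lemma trP_refl {X Y : C} {f : X ⟶ Y} (h : qmap f = qmap f) : trP P h = 𝟙 _ := by
  rw [trP_eq hP h (𝟙 f), P.nabla_id]

lemma trP_trans {X Y : C} {f g k : X ⟶ Y} (h : qmap f = qmap g) (h' : qmap g = qmap k) :
    trP P h ≫ trP P h' = trP P (h.trans h') := by
  rw [trP_eq hP h (Quotient.exact h).some, trP_eq hP h' (Quotient.exact h').some,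
    ← P.nabla_comp]
  exact (trP_eq hP _ _).symm

lemma trP_eqToHom {X Y : C} {f g : X ⟶ Y} (e : f = g) (h : qmap f = qmap g) :
    trP P h = P.D.map (eqToHom (congrArg (fun t : X ⟶ Y => FactObj.mk t) e)) := by
  subst e
  rw [trP_refl hP]
  simp

/-- The key compatibility: transporting along whiskered tracks matches the
natural-system structure maps. -/
lemma coreL {X Y X' Y' : C} {f g : X ⟶ Y} (ξ : f ⟶ g) {a a' : X' ⟶ X} (α : a ⟶ a')
    {b b' : Y ⟶ Y'} (β : b ⟶ b') :
    P.D.map (fmor f a b) ≫ P.nabla ((α ▷ (f ≫ b)) ≫ (a' ◁ (ξ ▷ b)) ≫ (a' ◁ (g ◁ β))) =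
      P.nabla ξ ≫ P.D.map (fmor g a' b') := by
  have hd : fmor f a b = natPost f b ≫ natPre a (f ≫ b) := by
    apply Subtype.ext
    show (a, b) = (a ≫ 𝟙 _, b ≫ 𝟙 _)
    simp
  have hd' : fmor g a' b' = natPost g b' ≫ natPre a' (g ≫ b') := by
    apply Subtype.ext
    show (a', b') = (a' ≫ 𝟙 _, b' ≫ 𝟙 _)
    simp
  rw [hd, hd', P.D.map_comp, P.D.map_comp, P.nabla_comp, P.nabla_comp]
  have s1 := P.outer_pre α (f ≫ b)
  have s2 := P.natural_pre a' (ξ ▷ b)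
  have s3 := P.natural_post ξ b
  have s4 := P.natural_pre a' (g ◁ β)
  have s5 := P.outer_post g β
  simp only [Category.assoc]
  rw [reassoc_of% s1, reassoc_of% s2, s4, reassoc_of% s3, reassoc_of% s5]

/-- The master independence lemma. -/
lemma L {X Y X' Y' : C} {f g : X ⟶ Y} (hs : qmap f = qmap g)
    {f₁ : X' ⟶ Y'} (u : FactObj.mk f ⟶ FactObj.mk f₁)
    {g₁ : X' ⟶ Y'} (u' : FactObj.mk g ⟶ FactObj.mk g₁)
    (h1 : qmap u.1.1 = qmap u'.1.1) (h2 : qmap u.1.2 = qmap u'.1.2)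
    (hs1 : qmap f₁ = qmap g₁) :
    P.D.map u ≫ trP P hs1 = trP P hs ≫ P.D.map u' := by
  obtain ⟨⟨a, b⟩, e⟩ := u
  obtain ⟨⟨a', b'⟩, e'⟩ := u'
  dsimp only at h1 h2 e e' ⊢
  dsimp only at a b a' b'
  subst e
  subst e'
  obtain ⟨ξ⟩ := Quotient.exact hs
  obtain ⟨α⟩ := Quotient.exact h1
  obtain ⟨β⟩ := Quotient.exact h2
  rw [trP_eq hP hs ξ,
    trP_eq hP hs1 ((α ▷ (f ≫ b)) ≫ (a' ◁ (ξ ▷ b)) ≫ (a' ◁ (g ◁ β)))]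
  exact coreL hP ξ α β

omit hP in
lemma EPh {F G : FactObj (Ho C)} (p : F ⟶ G) :
    qmap (Quotient.out p.1.1 ≫ Quotient.out F.hom ≫ Quotient.out p.1.2) =
      qmap (Quotient.out G.hom) := by
  calc qmap (Quotient.out p.1.1 ≫ Quotient.out F.hom ≫ Quotient.out p.1.2)
      = p.1.1 ≫ F.hom ≫ p.1.2 := by
        show qmap (Quotient.out p.1.1) ≫ qmap (Quotient.out F.hom) ≫
          qmap (Quotient.out p.1.2) = _
        rw [show qmap (Quotient.out p.1.1) = p.1.1 from Quotient.out_eq _,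
          show qmap (Quotient.out F.hom) = F.hom from Quotient.out_eq _,
          show qmap (Quotient.out p.1.2) = p.1.2 from Quotient.out_eq _]
    _ = G.hom := p.2.symm
    _ = qmap (Quotient.out G.hom) := (Quotient.out_eq _).symm

variable (P)

/-- The natural system on the homotopy category associated to an inert `T`-natural
system. -/
noncomputable def EP : NaturalSystem (Ho C) where
  obj F := P.D.obj (FactObj.mk (Quotient.out F.hom))
  map {F G} p :=
    P.D.map (fmor (Quotient.out F.hom) (Quotient.out p.1.1) (Quotient.out p.1.2)) ≫
      trP P (EPh p)
  map_id F := by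
    have hc1 : qmap (𝟙 (FactObj.mk (Quotient.out F.hom)) : _ ⟶ _).1.1 =
        qmap (Quotient.out (𝟙 F : F ⟶ F).1.1) := by
      show qmap (𝟙 F.src.obj) = qmap (Quotient.out (𝟙 F : F ⟶ F).1.1)
      exact (Quotient.out_eq _).symm
    have hc2 : qmap (𝟙 (FactObj.mk (Quotient.out F.hom)) : _ ⟶ _).1.2 =
        qmap (Quotient.out (𝟙 F : F ⟶ F).1.2) := by
      show qmap (𝟙 F.tgt.obj) = qmap (Quotient.out (𝟙 F : F ⟶ F).1.2)
      exact (Quotient.out_eq _).symm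
    have hs1 : qmap (Quotient.out F.hom) =
        qmap (Quotient.out (𝟙 F : F ⟶ F).1.1 ≫ Quotient.out F.hom ≫
          Quotient.out (𝟙 F : F ⟶ F).1.2) := (EPh (𝟙 F)).symm
    have hL := L hP (rfl : qmap (Quotient.out F.hom) = qmap (Quotient.out F.hom))
      (𝟙 (FactObj.mk (Quotient.out F.hom)))
      (fmor (Quotient.out F.hom) (Quotient.out (𝟙 F : F ⟶ F).1.1)
        (Quotient.out (𝟙 F : F ⟶ F).1.2)) hc1 hc2 hs1
    rw [P.D.map_id, Category.id_comp, trP_refl hP, Category.id_comp] at hL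
    show P.D.map (fmor (Quotient.out F.hom) (Quotient.out (𝟙 F : F ⟶ F).1.1)
        (Quotient.out (𝟙 F : F ⟶ F).1.2)) ≫ trP P (EPh (𝟙 F)) = 𝟙 _
    rw [← hL, trP_trans hP, trP_refl hP]
  map_comp {F G H} p r := by
    set f := Quotient.out F.hom with hfd
    set g := Quotient.out G.hom with hgd
    set Ap := Quotient.out p.1.1 with hApd
    set Bp := Quotient.out p.1.2 with hBpd
    set Ar := Quotient.out r.1.1 with hArd
    set Br := Quotient.out r.1.2 with hBrd
    set A₂ := Quotient.out (p ≫ r).1.1 with hA2d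
    set B₂ := Quotient.out (p ≫ r).1.2 with hB2d
    have hs1 : qmap (Ar ≫ (Ap ≫ f ≫ Bp) ≫ Br) = qmap (Ar ≫ g ≫ Br) := by
      show qmap Ar ≫ qmap (Ap ≫ f ≫ Bp) ≫ qmap Br = qmap Ar ≫ qmap g ≫ qmap Br
      rw [EPh p]
    have step1 := L hP (EPh p) (fmor (Ap ≫ f ≫ Bp) Ar Br) (fmor g Ar Br) rfl rfl hs1
    have hc1 : qmap (fmor f Ap Bp ≫ fmor (Ap ≫ f ≫ Bp) Ar Br).1.1 = qmap (fmor f A₂ B₂).1.1 := by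
      show qmap (Ar ≫ Ap) = qmap A₂
      calc qmap (Ar ≫ Ap) = qmap Ar ≫ qmap Ap := rfl
        _ = r.1.1 ≫ p.1.1 := by rw [show qmap Ar = r.1.1 from Quotient.out_eq _,
              show qmap Ap = p.1.1 from Quotient.out_eq _]
        _ = qmap A₂ := (Quotient.out_eq _).symm
    have hc2 : qmap (fmor f Ap Bp ≫ fmor (Ap ≫ f ≫ Bp) Ar Br).1.2 = qmap (fmor f A₂ B₂).1.2 := by
      show qmap (Bp ≫ Br) = qmap B₂
      calc qmap (Bp ≫ Br) = qmap Bp ≫ qmap Br := rfl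
        _ = p.1.2 ≫ r.1.2 := by rw [show qmap Bp = p.1.2 from Quotient.out_eq _,
              show qmap Br = r.1.2 from Quotient.out_eq _]
        _ = qmap B₂ := (Quotient.out_eq _).symm
    have hs2 : qmap (Ar ≫ (Ap ≫ f ≫ Bp) ≫ Br) = qmap (A₂ ≫ f ≫ B₂) :=
      (hs1.trans (EPh r)).trans (EPh (p ≫ r)).symm
    have step2 := L hP (rfl : qmap f = qmap f)
      (fmor f Ap Bp ≫ fmor (Ap ≫ f ≫ Bp) Ar Br) (fmor f A₂ B₂) hc1 hc2 hs2
    rw [trP_refl hP, Category.id_comp] at step2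
    show P.D.map (fmor f A₂ B₂) ≫ trP P (EPh (p ≫ r)) =
      (P.D.map (fmor f Ap Bp) ≫ trP P (EPh p)) ≫ (P.D.map (fmor g Ar Br) ≫ trP P (EPh r))
    calc P.D.map (fmor f A₂ B₂) ≫ trP P (EPh (p ≫ r))
        = (P.D.map (fmor f Ap Bp ≫ fmor (Ap ≫ f ≫ Bp) Ar Br) ≫ trP P hs2) ≫
            trP P (EPh (p ≫ r)) := by rw [step2]
      _ = P.D.map (fmor f Ap Bp ≫ fmor (Ap ≫ f ≫ Bp) Ar Br) ≫
            trP P (hs2.trans (EPh (p ≫ r))) := by rw [Category.assoc, trP_trans hP]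
      _ = P.D.map (fmor f Ap Bp ≫ fmor (Ap ≫ f ≫ Bp) Ar Br) ≫
            trP P (hs1.trans (EPh r)) := rfl
      _ = P.D.map (fmor f Ap Bp) ≫ P.D.map (fmor (Ap ≫ f ≫ Bp) Ar Br) ≫
            trP P hs1 ≫ trP P (EPh r) := by
          rw [P.D.map_comp, trP_trans hP]
          simp only [Category.assoc]
      _ = P.D.map (fmor f Ap Bp) ≫ trP P (EPh p) ≫ P.D.map (fmor g Ar Br) ≫
            trP P (EPh r) := by rw [reassoc_of% step1]
      _ = (P.D.map (fmor f Ap Bp) ≫ trP P (EPh p)) ≫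
            (P.D.map (fmor g Ar Br) ≫ trP P (EPh r)) := by simp only [Category.assoc]

omit hP in
lemma houtF (F : FactObj C) : qmap (Quotient.out (qmap F.hom)) = qmap F.hom :=
  Quotient.out_eq _

/-- The comparison morphism `q* (EP P) ⟶ P`. -/
noncomputable def PhiP : TNatHom (qstar (EP P hP)) P where
  t :=
    { app := fun F => trP P (houtF F)
      naturality := by
        intro F G u
        show (EP P hP).map (hoFact.map u) ≫ trP P (houtF G) = trP P (houtF F) ≫ P.D.map u
        have hL := L hP (houtF F)
          (fmor (Quotient.out (qmap F.hom)) (Quotient.out (hoFact.map u).1.1)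
            (Quotient.out (hoFact.map u).1.2)) u
          (Quotient.out_eq _) (Quotient.out_eq _) ((EPh (hoFact.map u)).trans (houtF G))
        show (P.D.map (fmor (Quotient.out (qmap F.hom)) (Quotient.out (hoFact.map u).1.1)
            (Quotient.out (hoFact.map u).1.2)) ≫ trP P (EPh (hoFact.map u))) ≫
            trP P (houtF G) = trP P (houtF F) ≫ P.D.map u
        rw [Category.assoc]
        erw [trP_trans hP]
        exact hL }
  compat := by
    intro X Y f g ξ
    show (EP P hP).map (eqToHom (homotopyClassEq ξ)) ≫ trP P (houtF (FactObj.mk g)) =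
      trP P (houtF (FactObj.mk f)) ≫ P.nabla ξ
    have e : Quotient.out (qmap f) = Quotient.out (qmap g) :=
      congrArg Quotient.out (hoMap_eq ξ)
    have tkey : eqToHom (congrArg (EP P hP).obj (homotopyClassEq ξ)) =
        trP P (congrArg qmap e) := by
      rw [trP_eqToHom hP e, eqToHom_map]
      rfl
    erw [eqToHom_map, tkey, trP_trans hP, ← trP_eq hP (hoMap_eq ξ) ξ, trP_trans hP]

end Aux15

/-- **Natural systems on the homotopy category and inert `T`-natural systems.**
For a track category `T`, the pullback functor `q*` along the quotient functor
`q : T₀ → T_ho` is a fully faithful functor from natural systems on `T_ho` to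
`T`-natural systems, whose essential image consists exactly of the inert
`T`-natural systems. -/
theorem stmt15 :
    (∀ (E E' : NaturalSystem (Ho C)) (Φ : TNatHom (qstar E) (qstar E')),
      ∃! ψ : E ⟶ E', qstarHom ψ = Φ) ∧
    (∀ E : NaturalSystem (Ho C), (qstar E).Inert) ∧
    (∀ P : TNatSys C, P.Inert →
      ∃ (E : NaturalSystem (Ho C)) (Φ : TNatHom (qstar E) P), IsIso Φ.t) := by
  refine ⟨?_, ?_, ?_⟩
  · intro E E' Φ
    refine ⟨{ app := appPhi Φ, naturality := fun _ _ p => appPhi_natural Φ p }, ?_, ?_⟩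
    · apply TNatHom.ext
      apply NatTrans.ext
      funext F
      show appPhi Φ (FactObj.mk (qmap F.hom)) = Φ.t.app F
      rw [appPhi_eq Φ F.hom (rfl : FactObj.mk (qmap F.hom) = FactObj.mk (qmap F.hom))]
      simp only [eqToHom_refl, CategoryTheory.Functor.map_id, Category.id_comp,
        Category.comp_id]
      erw [eqToHom_refl, E'.map_id, Category.comp_id]
    · intro ψ' h'
      apply NatTrans.ext
      funext F
      have happ : Φ.t.app (FactObj.mk (Quotient.out F.hom)) =
          ψ'.app (FactObj.mk (qmap (Quotient.out F.hom))) := by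
        rw [← h']; rfl
      show ψ'.app F = appPhi Φ F
      erw [show appPhi Φ F = E.map (eqToHom (outEq F).symm) ≫
          Φ.t.app (FactObj.mk (Quotient.out F.hom)) ≫ E'.map (eqToHom (outEq F)) from rfl,
        happ, ← ψ'.naturality (eqToHom (outEq F)), ← Functor.map_comp_assoc,
        eqToHom_trans, eqToHom_refl, E.map_id, Category.id_comp]
  · intro E X Y f ε'
    show E.map (eqToHom (homotopyClassEq ε')) = 𝟙 _
    rw [show homotopyClassEq ε' = rfl from rfl]
    simp
  · intro P hP
    refine ⟨EP P hP, PhiP P hP, ?_⟩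
    haveI : ∀ F, IsIso ((PhiP P hP).t.app F) := fun F =>
      ⟨⟨trP P (houtF F).symm,
        by show trP P (houtF F) ≫ trP P (houtF F).symm = 𝟙 _
           rw [trP_trans hP, trP_refl hP],
        by show trP P (houtF F).symm ≫ trP P (houtF F) = 𝟙 _
           rw [trP_trans hP, trP_refl hP]⟩⟩
    exact NatIso.isIso_of_isIso_app _
end
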